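/- arXiv:2205.02695 — 2 statements merged into one kernel-verified Lean document; each statement's English description precedes it below -/
import Mathlib

section
/- For every integer N ≥ 3, every λ ∈ [0,1], and every positive semidefinite complex 2^N × 2^N matrix ρ, one has Tr(W^λ ρ) ≥ λ·Tr(W ρ). In particular, if Tr(W ρ) ≥ 0 (as holds for all biseparable states by Tóth–Gühne), then also Tr(W^λ ρ) ≥ 0, so W^λ is again a genuine multipartite entanglement witness. -/
open Matrix
open scoped ComplexOrder

noncomputable section

/-- The space of operators on `N` qubits: complex `2^N × 2^N` matrices, with the
`N`-fold tensor-product structure made explicit by indexing rows and columns by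
functions `Fin N → Fin 2`. -/
abbrev QM (N : ℕ) := Matrix (Fin N → Fin 2) (Fin N → Fin 2) ℂ

/-- The Pauli matrix σ_x. -/
def sigx : Matrix (Fin 2) (Fin 2) ℂ := !![0, 1; 1, 0]

/-- The Pauli matrix σ_z. -/
def sigz : Matrix (Fin 2) (Fin 2) ℂ := !![1, 0; 0, -1]

/-- The tensor (Kronecker) product `f 0 ⊗ f 1 ⊗ ⋯ ⊗ f (N-1)` of single-qubit operators. -/
def tensorAll (N : ℕ) (f : Fin N → Matrix (Fin 2) (Fin 2) ℂ) : QM N :=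
  Matrix.of fun v w => ∏ i, f i (v i) (w i)

/-- The single-qubit operator `M` acting on qubit `m`, tensored with the identity
on all other qubits. -/
def site (N : ℕ) (m : Fin N) (M : Matrix (Fin 2) (Fin 2) ℂ) : QM N :=
  tensorAll N (fun i => if i = m then M else 1)

/-- GHZ stabilizer generator `S_1 = σ_x^(1) σ_x^(2) ⋯ σ_x^(N)`. -/
def ghzS1 (N : ℕ) : QM N := tensorAll N (fun _ => sigx)

/-- GHZ stabilizer generator with σ_z on qubits `m-1` and `m` (0-based `m : Fin N`,
`m ≠ 0`); it represents the 1-based generator `S_{m+1} = σ_z^{(m)} σ_z^{(m+1)}`. -/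
def ghzSz (N : ℕ) (m : Fin N) : QM N :=
  tensorAll N (fun i => if i.val = m.val - 1 ∨ i = m then sigz else 1)

/-- The product `∏_{m=2}^{N} (I + S_m)/2` appearing in the GHZ witness
(the factors pairwise commute, so the list ordering is immaterial). -/
def ghzProd (N : ℕ) : QM N :=
  (((List.finRange N).filter (fun m => m.val ≠ 0)).map
    (fun m => (1/2 : ℂ) • ((1 : QM N) + ghzSz N m))).prod

/-- The GHZ genuine-multipartite-entanglement witness
`W = 3 I − 2 [ (I + S_1)/2 + ∏_{m=2}^N (I + S_m)/2 ]`. -/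
def ghzWitness (N : ℕ) : QM N :=
  (3 : ℂ) • (1 : QM N) -
    (2 : ℂ) • ((1/2 : ℂ) • ((1 : QM N) + ghzS1 N) + ghzProd N)

/-- The modified (unsharp) GHZ witness
`W^λ = 3 I − 2 [ (I + λ S_1)/2 + ∏_{m=2}^N (I + S_m)/2 ]`. -/
def ghzWitnessMod (N : ℕ) (lam : ℝ) : QM N :=
  (3 : ℂ) • (1 : QM N) -
    (2 : ℂ) • ((1/2 : ℂ) • ((1 : QM N) + (lam : ℂ) • ghzS1 N) + ghzProd N)



/-- Diagonal form of `ghzSz`'s single-site factors, as entry function. -/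
def szDiag (N : ℕ) (m : Fin N) : (Fin N → Fin 2) → ℂ :=
  fun v => ∏ i, (if i.val = m.val - 1 ∨ i = m then sigz else 1) (v i) (v i)

lemma tensorAll_diag (N : ℕ) (f : Fin N → Matrix (Fin 2) (Fin 2) ℂ)
    (hf : ∀ i a b, a ≠ b → f i a b = 0) :
    tensorAll N f = Matrix.diagonal (fun v => ∏ i, f i (v i) (v i)) := by
  ext v w
  by_cases h : v = w
  · subst h
    simp [tensorAll, Matrix.diagonal_apply_eq]
  · obtain ⟨i, hi⟩ := Function.ne_iff.mp h
    rw [Matrix.diagonal_apply_ne _ h]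
    show ∏ j, f j (v j) (w j) = 0
    exact Finset.prod_eq_zero (Finset.mem_univ i) (hf i _ _ hi)

lemma fin2_cases (a : Fin 2) : a = 0 ∨ a = 1 := by
  fin_cases a
  · exact Or.inl rfl
  · exact Or.inr rfl

lemma ghzSz_eq_diagonal (N : ℕ) (m : Fin N) :
    ghzSz N m = Matrix.diagonal (szDiag N m) := by
  apply tensorAll_diag
  intro i a b hab
  by_cases h : i.val = m.val - 1 ∨ i = m
  · simp only [h, if_true]
    fin_cases a <;> fin_cases b <;> simp_all [sigz]
  · simp only [h, if_false]
    exact Matrix.one_apply_ne hab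

lemma list_diag_prod (N : ℕ) (g : Fin N → (Fin N → Fin 2) → ℂ) (l : List (Fin N)) :
    (l.map (fun m => (Matrix.diagonal (g m) : QM N))).prod
      = Matrix.diagonal (fun v => (l.map (fun m => g m v)).prod) := by
  induction l with
  | nil =>
      simp only [List.map_nil, List.prod_nil]
      exact Matrix.diagonal_one.symm
  | cons a t ih =>
      simp only [List.map_cons, List.prod_cons, ih, Matrix.diagonal_mul_diagonal]

lemma factor_eq_diagonal (N : ℕ) (m : Fin N) :
    (1/2 : ℂ) • ((1 : QM N) + ghzSz N m)
      = Matrix.diagonal (fun v => (1/2 : ℂ) * (1 + szDiag N m v)) := by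
  rw [ghzSz_eq_diagonal]
  ext v w
  by_cases h : v = w
  · subst h
    simp [Matrix.diagonal_apply_eq, Matrix.one_apply_eq]
  · simp [Matrix.diagonal_apply_ne _ h, Matrix.one_apply_ne h]

/-- The diagonal entries of `ghzProd`. -/
def prodDiag (N : ℕ) : (Fin N → Fin 2) → ℂ := fun v =>
  ((((List.finRange N).filter (fun m => m.val ≠ 0)).map
    (fun m => (1/2 : ℂ) * (1 + szDiag N m v)))).prod

lemma ghzProd_eq_diagonal (N : ℕ) :
    ghzProd N = Matrix.diagonal (prodDiag N) := by
  unfold ghzProd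
  simp only [factor_eq_diagonal]
  exact list_diag_prod N (fun m v => (1/2 : ℂ) * (1 + szDiag N m v)) _

lemma szDiag_mem (N : ℕ) (m : Fin N) (v : Fin N → Fin 2) :
    szDiag N m v = 1 ∨ szDiag N m v = -1 := by
  unfold szDiag
  refine Finset.prod_induction _ (fun x => x = 1 ∨ x = -1) ?_ (Or.inl rfl) ?_
  · rintro x y (hx | hx) (hy | hy) <;> simp [hx, hy]
  · intro i _
    by_cases h : i.val = m.val - 1 ∨ i = m
    · simp only [h, if_true]
      rcases fin2_cases (v i) with h2 | h2 <;> rw [h2] <;> simp [sigz]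
    · simp [h, Matrix.one_apply_eq]

lemma prodDiag_mem (N : ℕ) (v : Fin N → Fin 2) :
    prodDiag N v = 0 ∨ prodDiag N v = 1 := by
  unfold prodDiag
  generalize ((List.finRange N).filter (fun m => m.val ≠ 0)) = l
  induction l with
  | nil => simp
  | cons a t ih =>
      simp only [List.map_cons, List.prod_cons]
      have hf : (1/2 : ℂ) * (1 + szDiag N a v) = 1 ∨
          (1/2 : ℂ) * (1 + szDiag N a v) = 0 := by
        rcases szDiag_mem N a v with h | h <;> rw [h] <;> norm_num
      rcases hf with h | h <;> rcases ih with h2 | h2 <;> rw [h, h2] <;> norm_num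

lemma one_sub_ghzProd_posSemidef (N : ℕ) :
    ((1 : QM N) - ghzProd N).PosSemidef := by
  rw [ghzProd_eq_diagonal, ← Matrix.diagonal_one, Matrix.diagonal_sub]
  refine Matrix.posSemidef_diagonal_iff.mpr fun v => ?_
  rcases prodDiag_mem N v with h | h <;> simp [h]

lemma psd_trace_nonneg {n : Type*} [Fintype n] {M : Matrix n n ℂ}
    (h : M.PosSemidef) : 0 ≤ M.trace := by
  classical
  rw [Matrix.trace]
  refine Finset.sum_nonneg fun i _ => ?_
  exact h.diag_nonneg

open scoped MatrixOrder in
lemma trace_mul_psd_nonneg {n : Type*} [Fintype n] [DecidableEq n]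
    {A B : Matrix n n ℂ} (hA : A.PosSemidef) (hB : B.PosSemidef) :
    0 ≤ (A * B).trace := by
  have h1 : A = CFC.sqrt A * CFC.sqrt A := (CFC.sqrt_mul_sqrt_self A hA.nonneg).symm
  rw [h1, Matrix.mul_assoc, Matrix.trace_mul_comm]
  have hherm : (CFC.sqrt A).conjTranspose = CFC.sqrt A := (CFC.sqrt_nonneg A).posSemidef.1
  have hp : ((CFC.sqrt A * B) * CFC.sqrt A).PosSemidef := by
    have := hB.conjTranspose_mul_mul_same (CFC.sqrt A)
    rwa [hherm] at this
  exact psd_trace_nonneg hp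

lemma witness_identity (N : ℕ) (lam : ℝ) :
    ghzWitnessMod N lam = (lam : ℂ) • ghzWitness N
      + (((2 - 2*lam : ℝ) : ℂ)) • ((1 : QM N) - ghzProd N) := by
  unfold ghzWitnessMod ghzWitness
  push_cast
  module

/-- For every integer `N ≥ 3`, every `λ ∈ [0,1]`, and every positive
semidefinite complex `2^N × 2^N` matrix `ρ`, one has `Tr(W^λ ρ) ≥ λ·Tr(W ρ)`.
In particular, if `Tr(W ρ) ≥ 0` (as holds for all biseparable states by Tóth–Gühne),
then also `Tr(W^λ ρ) ≥ 0`, so `W^λ` is again a genuine multipartite entanglement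
witness. (The traces are real since the witnesses are Hermitian and `ρ` is positive
semidefinite, so the inequalities are stated for the real parts.) -/
theorem ghz_modifiedWitness_trace_ge
    (N : ℕ) (hN : 3 ≤ N) (lam : ℝ) (hlam : lam ∈ Set.Icc (0 : ℝ) 1)
    (ρ : QM N) (hρ : ρ.PosSemidef) :
    lam * ((ghzWitness N * ρ).trace).re ≤ ((ghzWitnessMod N lam * ρ).trace).re ∧
      (0 ≤ ((ghzWitness N * ρ).trace).re → 0 ≤ ((ghzWitnessMod N lam * ρ).trace).re) := by
  obtain ⟨h0, h1⟩ := hlam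
  have hpsd := one_sub_ghzProd_posSemidef N
  have ht : 0 ≤ (((1 : QM N) - ghzProd N) * ρ).trace := trace_mul_psd_nonneg hpsd hρ
  have htre : 0 ≤ ((((1 : QM N) - ghzProd N) * ρ).trace).re := (Complex.le_def.mp ht).1
  have hc : (0:ℝ) ≤ 2 - 2*lam := by linarith
  have key : ((ghzWitnessMod N lam * ρ).trace).re
      = lam * ((ghzWitness N * ρ).trace).re
        + (2 - 2*lam) * ((((1 : QM N) - ghzProd N) * ρ).trace).re := by
    rw [witness_identity N lam, add_mul, Matrix.trace_add, smul_mul_assoc,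
      smul_mul_assoc, Matrix.trace_smul, Matrix.trace_smul]
    simp [Complex.add_re, Complex.re_ofReal_mul]
  constructor
  · rw [key]
    nlinarith
  · intro h
    rw [key]
    nlinarith

end
end

section
/- For every real constant c > 0 and every natural number n, there exist real numbers λ_1, …, λ_n, all lying in the open interval (0,1), such that λ_k > (2^{k−1}/c)·[1 − ∏_{j=1}^{k−1} (1+√(1−λ_j²))/2] holds for every k = 1, …, n (for k = 1 the empty product equals 1, so the condition reads λ_1 > 0). -/
/-- Weierstrass product inequality: `1 - ∑ a ≤ ∏ (1 - a)` for `a i ∈ [0,1]`. -/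
lemma weierstrass_prod (s : Finset ℕ) (a : ℕ → ℝ)
    (h0 : ∀ i ∈ s, 0 ≤ a i) (h1 : ∀ i ∈ s, a i ≤ 1) :
    1 - ∑ i ∈ s, a i ≤ ∏ i ∈ s, (1 - a i) := by
  classical
  induction s using Finset.induction_on with
  | empty => simp
  | @insert x t hx ih =>
    rw [Finset.sum_insert hx, Finset.prod_insert hx]
    have h0' : ∀ i ∈ t, 0 ≤ a i := fun i hi => h0 i (Finset.mem_insert_of_mem hi)
    have h1' : ∀ i ∈ t, a i ≤ 1 := fun i hi => h1 i (Finset.mem_insert_of_mem hi)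
    have ih' := ih h0' h1'
    have hax0 : 0 ≤ a x := h0 x (Finset.mem_insert_self _ _)
    have hax1 : a x ≤ 1 := h1 x (Finset.mem_insert_self _ _)
    have hsum0 : 0 ≤ ∑ i ∈ t, a i := Finset.sum_nonneg h0'
    nlinarith [ih', mul_nonneg hax0 hsum0]

/-- For every real constant `c > 0` and every natural number `n`,
there exist real numbers `λ_1, …, λ_n`, all lying in the open interval `(0,1)`, such
that `λ_k > (2^{k−1}/c)·[1 − ∏_{j=1}^{k−1} (1+√(1−λ_j²))/2]` holds for every
`k = 1, …, n` (for `k = 1` the empty product equals `1`, so the condition reads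
`λ_1 > 0`). -/
theorem sharpness_parameters_exist
    (c : ℝ) (hc : 0 < c) (n : ℕ) :
    ∃ lam : ℕ → ℝ,
      (∀ k, 1 ≤ k → k ≤ n → lam k ∈ Set.Ioo (0 : ℝ) 1) ∧
      ∀ k, 1 ≤ k → k ≤ n →
        lam k > (2 : ℝ) ^ (k - 1) / c
          * (1 - ∏ j ∈ Finset.Icc 1 (k - 1), (1 + Real.sqrt (1 - lam j ^ 2)) / 2) := by
  set ε : ℝ := min (1/2) (c / (2 * 8 ^ n)) with hεdef
  have hε0 : 0 < ε := lt_min (by norm_num) (by positivity)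
  have hεhalf : ε ≤ 1/2 := min_le_left _ _
  have hεc : ε ≤ c / (2 * 8 ^ n) := min_le_right _ _
  set lam : ℕ → ℝ := fun j => ε / 4 ^ j with hlam
  have hlam_pos : ∀ j, 0 < lam j := fun j => by positivity
  have hlam_le : ∀ j, lam j ≤ ε := by
    intro j
    exact div_le_self hε0.le (one_le_pow₀ (by norm_num : (1:ℝ) ≤ 4))
  have hmem : ∀ k, lam k ∈ Set.Ioo (0:ℝ) 1 := by
    intro k
    exact ⟨hlam_pos k, lt_of_le_of_lt (le_trans (hlam_le k) hεhalf) (by norm_num)⟩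
  refine ⟨lam, fun k _ _ => hmem k, ?_⟩
  intro k hk1 hkn
  set S := Finset.Icc 1 (k-1) with hS
  -- elementwise bound on the product factors
  have hfac : ∀ j ∈ S, 1 - lam j ^ 2 / 2 ≤ (1 + Real.sqrt (1 - lam j ^ 2)) / 2 := by
    intro j _
    have hl0 : 0 < lam j := hlam_pos j
    have hl1 : lam j ≤ 1/2 := le_trans (hlam_le j) hεhalf
    have h1 : 0 ≤ 1 - lam j ^ 2 := by nlinarith
    have hs2 : Real.sqrt (1 - lam j ^ 2) ^ 2 = 1 - lam j ^ 2 := Real.sq_sqrt h1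
    have hs0 : 0 ≤ Real.sqrt (1 - lam j ^ 2) := Real.sqrt_nonneg _
    have hs1 : Real.sqrt (1 - lam j ^ 2) ≤ 1 := by nlinarith
    nlinarith
  have hfac0 : ∀ j ∈ S, 0 ≤ 1 - lam j ^ 2 / 2 := by
    intro j _
    have hl0 : 0 < lam j := hlam_pos j
    have hl1 : lam j ≤ 1/2 := le_trans (hlam_le j) hεhalf
    nlinarith
  have hprod1 : ∏ j ∈ S, (1 - lam j ^ 2 / 2) ≤
      ∏ j ∈ S, (1 + Real.sqrt (1 - lam j ^ 2)) / 2 :=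
    Finset.prod_le_prod hfac0 hfac
  have hW : 1 - ∑ j ∈ S, lam j ^ 2 / 2 ≤ ∏ j ∈ S, (1 - lam j ^ 2 / 2) := by
    apply weierstrass_prod
    · intro j _
      positivity
    · intro j hj
      have := hfac0 j hj
      linarith
  -- bound the sum by ε^2
  have hsum : ∑ j ∈ S, lam j ^ 2 / 2 ≤ ε ^ 2 := by
    have heq : ∀ j, lam j ^ 2 / 2 = ε ^ 2 / 2 * (1/16 : ℝ) ^ j := by
      intro j
      field_simp [hlam]
      ring_nf
      show (ε / 4 ^ j) ^ 2 = ε ^ 2 * (1 / 16) ^ j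
      rw [show (1/16:ℝ) = (1/4)^2 by norm_num, ← pow_mul, mul_comm 2 j, pow_mul, one_div_pow]
      ring
    calc ∑ j ∈ S, lam j ^ 2 / 2 = ε ^ 2 / 2 * ∑ j ∈ S, (1/16 : ℝ) ^ j := by
          rw [Finset.mul_sum]; exact Finset.sum_congr rfl fun j _ => heq j
      _ ≤ ε ^ 2 / 2 * ∑ j ∈ Finset.range k, (1/16 : ℝ) ^ j := by
          apply mul_le_mul_of_nonneg_left _ (by positivity)
          apply Finset.sum_le_sum_of_subset_of_nonneg
          · intro j hj
            simp only [hS, Finset.mem_Icc] at hj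
            exact Finset.mem_range.2 (lt_of_le_of_lt hj.2 (Nat.sub_lt hk1 one_pos))
          · intro j _ _; positivity
      _ ≤ ε ^ 2 / 2 * 2 := by
          apply mul_le_mul_of_nonneg_left _ (by positivity)
          rw [geom_sum_eq (by norm_num : (1/16:ℝ) ≠ 1) k,
            div_le_iff_of_neg (by norm_num : (1/16:ℝ) - 1 < 0)]
          have hpk : (0:ℝ) ≤ (1/16:ℝ) ^ k := by positivity
          linarith
      _ = ε ^ 2 := by ring
  -- combine
  have h1P : 1 - ∏ j ∈ S, (1 + Real.sqrt (1 - lam j ^ 2)) / 2 ≤ ε ^ 2 := by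
    linarith
  have hM : (0:ℝ) < (2:ℝ) ^ (k-1) / c := by positivity
  have hstep : (2:ℝ) ^ (k-1) / c *
      (1 - ∏ j ∈ S, (1 + Real.sqrt (1 - lam j ^ 2)) / 2) ≤
      (2:ℝ) ^ (k-1) / c * ε ^ 2 :=
    mul_le_mul_of_nonneg_left h1P hM.le
  have hkey : (2:ℝ) ^ (k-1) / c * ε ^ 2 < lam k := by
    have hpow : (2:ℝ) ^ (k-1) * 4 ^ k ≤ 8 ^ n := by
      calc (2:ℝ) ^ (k-1) * 4 ^ k ≤ 2 ^ k * 4 ^ k := by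
            apply mul_le_mul_of_nonneg_right _ (by positivity)
            exact pow_le_pow_right₀ (by norm_num) (Nat.sub_le k 1)
        _ = 8 ^ k := by rw [← mul_pow]; norm_num
        _ ≤ 8 ^ n := pow_le_pow_right₀ (by norm_num) hkn
    have h8n : (0:ℝ) < 8 ^ n := by positivity
    have hεsmall : ε * (2 * 8 ^ n) ≤ c := by
      rw [← le_div_iff₀ (by positivity)]
      exact hεc
    have h4k : (0:ℝ) < 4 ^ k := by positivity
    rw [div_mul_eq_mul_div, div_lt_iff₀ hc]
    show (2:ℝ) ^ (k-1) * ε ^ 2 < ε / 4 ^ k * c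
    rw [div_mul_eq_mul_div, lt_div_iff₀ h4k]
    have hp0 : (0:ℝ) ≤ (2:ℝ) ^ (k-1) := by positivity
    nlinarith [mul_le_mul_of_nonneg_right hpow hε0.le,
      mul_le_mul_of_nonneg_right hεsmall hε0.le]
  exact lt_of_le_of_lt hstep hkey
end
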